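/- If π and σ are partial involution matrices, B is an invertible upper-triangular complex matrix, and Bᵗ·π·B = σ, then π = σ. Consequently, distinct partial involutions lie in distinct congruence B-orbits. -/

import Mathlib

open Matrix

/-- A partial permutation matrix: a 0-1 matrix with at most one 1 in each row
and each column. -/
def IsPartialPermMatrix {n : ℕ} (X : Matrix (Fin n) (Fin n) ℂ) : Prop :=
  (∀ i j, X i j = 0 ∨ X i j = 1) ∧
    (∀ i, {j | X i j = 1}.Subsingleton) ∧
    (∀ j, {i | X i j = 1}.Subsingleton)

/-- A partial involution matrix: a symmetric partial permutation matrix. -/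
def IsPartialInvolution {n : ℕ} (X : Matrix (Fin n) (Fin n) ℂ) : Prop :=
  IsPartialPermMatrix X ∧ X.IsSymm

namespace Stmt8Aux

open Finset

variable {n : ℕ}

open scoped Classical in
/-- The set of ones of `X` in the upper-left `a × b` corner. -/
noncomputable def ones (X : Matrix (Fin n) (Fin n) ℂ) (a b : ℕ) : Finset (Fin n × Fin n) :=
  Finset.univ.filter fun p => (p.1 : ℕ) < a ∧ (p.2 : ℕ) < b ∧ X p.1 p.2 = 1

lemma mem_ones {X : Matrix (Fin n) (Fin n) ℂ} {a b : ℕ} {p : Fin n × Fin n} :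
    p ∈ ones X a b ↔ (p.1 : ℕ) < a ∧ (p.2 : ℕ) < b ∧ X p.1 p.2 = 1 := by
  simp [ones]

/-- The rank of a partial permutation matrix is the number of its ones. -/
lemma rank_ppm (X : Matrix (Fin n) (Fin n) ℂ) (hX : IsPartialPermMatrix X) :
    X.rank = (ones X n n).card := by
  classical
  have hmemO : ∀ p : Fin n × Fin n, p ∈ ones X n n ↔ X p.1 p.2 = 1 := by
    intro p; simp [mem_ones, p.1.isLt, p.2.isLt]
  set O := ones X n n with hO
  set I : Finset (Fin n) := O.image Prod.fst with hI
  have hcard : O.card = I.card := by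
    refine (Finset.card_image_of_injOn ?_).symm
    intro p hp q hq hpq
    have hp1 := (hmemO p).1 hp
    have hq1 := (hmemO q).1 hq
    have h2 : p.2 = q.2 :=
      hX.2.1 p.1 (show p.2 ∈ {j | X p.1 j = 1} from hp1)
        (show q.2 ∈ {j | X p.1 j = 1} from by rw [hpq]; exact hq1)
    exact Prod.ext hpq h2
  have hcol : ∀ j : Fin n, Xᵀ j = 0 ∨ ∃ i, (i, j) ∈ O ∧ Xᵀ j = Pi.single i 1 := by
    intro j
    by_cases hc : ∃ i, X i j = 1
    · obtain ⟨i, hi⟩ := hc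
      refine Or.inr ⟨i, (hmemO (i, j)).2 hi, ?_⟩
      funext i'
      rw [Pi.single_apply]
      by_cases hii : i' = i
      · subst hii; simpa [Matrix.transpose_apply] using hi
      · simp only [Matrix.transpose_apply, if_neg hii]
        rcases hX.1 i' j with h0 | h1
        · exact h0
        · exact absurd (hX.2.2 j (show i' ∈ {i | X i j = 1} from h1)
            (show i ∈ {i | X i j = 1} from hi)) hii
    · push_neg at hc
      refine Or.inl (funext fun i => ?_)
      rcases hX.1 i j with h0 | h1
      · simpa [Matrix.transpose_apply] using h0
      · exact absurd h1 (hc i)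
  have hli : LinearIndependent ℂ (fun i : I => (Pi.single (i : Fin n) (1 : ℂ) : Fin n → ℂ)) := by
    have hb := (Pi.basisFun ℂ (Fin n)).linearIndependent
    have h2 := hb.comp (Subtype.val : I → Fin n) Subtype.val_injective
    have h3 : (fun i : I => (Pi.single (i : Fin n) (1 : ℂ) : Fin n → ℂ))
        = (⇑(Pi.basisFun ℂ (Fin n)) ∘ (Subtype.val : I → Fin n)) := by
      funext i
      simp [Pi.basisFun_apply]
    rw [h3]
    exact h2
  have hspan : Submodule.span ℂ (Set.range Xᵀ)
      = Submodule.span ℂ (Set.range fun i : I => (Pi.single (i : Fin n) (1 : ℂ) : Fin n → ℂ)) := by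
    apply le_antisymm
    · rw [Submodule.span_le]
      rintro _ ⟨j, rfl⟩
      rcases hcol j with h0 | ⟨i, hiO, hje⟩
      · rw [h0]; exact Submodule.zero_mem _
      · rw [hje]
        exact Submodule.subset_span
          ⟨⟨i, Finset.mem_image_of_mem _ hiO⟩, rfl⟩
    · rw [Submodule.span_le]
      rintro _ ⟨⟨i, hi⟩, rfl⟩
      obtain ⟨p, hpO, hpi⟩ := Finset.mem_image.1 hi
      rcases hcol p.2 with h0 | ⟨i', hi'O, hje⟩
      · have h1 := (hmemO p).1 hpO
        have : Xᵀ p.2 p.1 = 0 := by rw [h0]; rfl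
        rw [Matrix.transpose_apply, h1] at this
        exact absurd this one_ne_zero
      · have hii : i' = p.1 :=
          hX.2.2 p.2 (show i' ∈ {i | X i p.2 = 1} from (hmemO _).1 hi'O)
            (show p.1 ∈ {i | X i p.2 = 1} from (hmemO p).1 hpO)
      -- Pi.single i 1 = Xᵀ p.2
        refine Submodule.subset_span ⟨p.2, ?_⟩
        rw [hje, hii, hpi]
  rw [Matrix.rank_eq_finrank_span_cols,
    (show Submodule.span ℂ (Set.range X.col) = _ from hspan), finrank_span_eq_card hli,
    Fintype.card_coe, hcard]

/-- Projection onto the first `i+1` coordinates. -/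
noncomputable def E (i : Fin n) : Matrix (Fin n) (Fin n) ℂ :=
  Matrix.diagonal fun k => if k ≤ i then 1 else 0

lemma E_transpose (i : Fin n) : (E i)ᵀ = E i := Matrix.diagonal_transpose _

lemma E_idem (i : Fin n) : E i * E i = E i := by
  ext k l
  simp only [E, Matrix.diagonal_mul_diagonal, Matrix.diagonal_apply]
  split_ifs <;> ring

lemma E_mul_apply (i : Fin n) (M : Matrix (Fin n) (Fin n) ℂ) (k l : Fin n) :
    (E i * M) k l = if k ≤ i then M k l else 0 := by
  rw [E, Matrix.diagonal_mul]
  split_ifs <;> ring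

lemma mul_E_apply (j : Fin n) (M : Matrix (Fin n) (Fin n) ℂ) (k l : Fin n) :
    (M * E j) k l = if l ≤ j then M k l else 0 := by
  rw [E, Matrix.mul_diagonal]
  split_ifs <;> ring

lemma corner_apply (i j : Fin n) (M : Matrix (Fin n) (Fin n) ℂ) (k l : Fin n) :
    (E i * M * E j) k l = if k ≤ i ∧ l ≤ j then M k l else 0 := by
  rw [mul_E_apply, E_mul_apply]
  split_ifs with h1 h2 h3 h3 <;> first | rfl | tauto

/-- The truncation of `B` which is the identity outside the corner. -/
noncomputable def Bc (B : Matrix (Fin n) (Fin n) ℂ) (i : Fin n) : Matrix (Fin n) (Fin n) ℂ :=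
  E i * B * E i + (1 - E i)

section Transfer

variable (B : Matrix (Fin n) (Fin n) ℂ) (hBt : ∀ i j : Fin n, j < i → B i j = 0)

include hBt in
lemma absorb_right (j : Fin n) : E j * B * E j = B * E j := by
  ext k l
  rw [mul_E_apply, mul_E_apply, E_mul_apply]
  by_cases hl : l ≤ j
  · by_cases hk : k ≤ j
    · simp [hl, hk]
    · have : l < k := lt_of_le_of_lt hl (lt_of_not_ge hk)
      simp [hl, hk, hBt k l this]
  · simp [hl]

include hBt in
lemma absorb_left (i : Fin n) : E i * Bᵀ * E i = E i * Bᵀ := by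
  ext k l
  rw [mul_E_apply, E_mul_apply]
  by_cases hk : k ≤ i
  · by_cases hl : l ≤ i
    · simp [hl, hk]
    · have : k < l := lt_of_le_of_lt hk (lt_of_not_ge hl)
      simp [hl, hk, Matrix.transpose_apply, hBt l k this]
  · simp [hk]

lemma Bc_transpose (i : Fin n) :
    (Bc B i)ᵀ = E i * Bᵀ * E i + (1 - E i) := by
  rw [Bc, Matrix.transpose_add, Matrix.transpose_sub, Matrix.transpose_one,
    Matrix.transpose_mul, Matrix.transpose_mul, E_transpose, ← mul_assoc]

include hBt in
lemma Bct_mul_E (i : Fin n) : (Bc B i)ᵀ * E i = E i * Bᵀ := by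
  rw [Bc_transpose, add_mul, sub_mul, one_mul, mul_assoc, E_idem,
    absorb_left B hBt, sub_self, add_zero]

include hBt in
lemma E_mul_Bc (j : Fin n) : E j * Bc B j = B * E j := by
  rw [Bc, mul_add, mul_sub, mul_one, ← mul_assoc, ← mul_assoc, E_idem,
    absorb_right B hBt, sub_self, add_zero]

include hBt in
lemma transfer (M : Matrix (Fin n) (Fin n) ℂ) (i j : Fin n) :
    (Bc B i)ᵀ * (E i * M * E j) * Bc B j = E i * (Bᵀ * M * B) * E j := by
  calc (Bc B i)ᵀ * (E i * M * E j) * Bc B j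
      = ((Bc B i)ᵀ * E i) * (M * (E j * Bc B j)) := by
        simp only [mul_assoc]
    _ = (E i * Bᵀ) * (M * (B * E j)) := by rw [Bct_mul_E B hBt, E_mul_Bc B hBt]
    _ = E i * (Bᵀ * M * B) * E j := by simp only [mul_assoc]

include hBt in
lemma det_Bc (hBu : IsUnit B.det) (i : Fin n) : IsUnit (Bc B i).det := by
  have hBtri : B.BlockTriangular id := fun k l hl => hBt k l hl
  have hdiag : ∀ k, B k k ≠ 0 := by
    rw [Matrix.det_of_upperTriangular hBtri, isUnit_iff_ne_zero,
      Finset.prod_ne_zero_iff] at hBu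
    exact fun k => hBu k (Finset.mem_univ k)
  have htri : (Bc B i).BlockTriangular id := by
    intro k l hl
    have hl' : l < k := hl
    have hkl : k ≠ l := ne_of_gt hl'
    have hE : (E i) k l = 0 := by simp [E, Matrix.diagonal_apply_ne _ hkl]
    rw [Bc, Matrix.add_apply, corner_apply, Matrix.sub_apply,
      Matrix.one_apply_ne hkl, hE]
    split_ifs with hc
    · rw [hBt k l hl']; ring
    · ring
  have hdiagBc : ∀ k, (Bc B i) k k = if k ≤ i then B k k else 1 := by
    intro k
    have hE : (E i) k k = if k ≤ i then (1 : ℂ) else 0 := by simp [E]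
    rw [Bc, Matrix.add_apply, corner_apply, Matrix.sub_apply,
      Matrix.one_apply_eq, hE]
    by_cases hc : k ≤ i <;> simp [hc]
  rw [Matrix.det_of_upperTriangular htri, isUnit_iff_ne_zero, Finset.prod_ne_zero_iff]
  intro k _
  rw [hdiagBc]
  split_ifs with hc
  · exact hdiag k
  · exact one_ne_zero

end Transfer

/-- The rank of the corner of a partial permutation matrix counts its ones. -/
lemma corner_rank (X : Matrix (Fin n) (Fin n) ℂ) (hX : IsPartialPermMatrix X) (i j : Fin n) :
    (E i * X * E j).rank = (ones X ((i : ℕ) + 1) ((j : ℕ) + 1)).card := by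
  classical
  have hent : ∀ k l, (E i * X * E j) k l = if k ≤ i ∧ l ≤ j then X k l else 0 :=
    corner_apply i j X
  have hXc : IsPartialPermMatrix (E i * X * E j) := by
    refine ⟨fun k l => ?_, fun k => ?_, fun l => ?_⟩
    · rw [hent]; split_ifs with hc
      · exact hX.1 k l
      · exact Or.inl rfl
    · intro a ha b hb
      have ha' : X k a = 1 := by
        have := ha; rw [Set.mem_setOf_eq, hent] at this
        split_ifs at this with hc
        · exact this
        · exact absurd this.symm one_ne_zero
      have hb' : X k b = 1 := by
        have := hb; rw [Set.mem_setOf_eq, hent] at this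
        split_ifs at this with hc
        · exact this
        · exact absurd this.symm one_ne_zero
      exact hX.2.1 k ha' hb'
    · intro a ha b hb
      have ha' : X a l = 1 := by
        have := ha; rw [Set.mem_setOf_eq, hent] at this
        split_ifs at this with hc
        · exact this
        · exact absurd this.symm one_ne_zero
      have hb' : X b l = 1 := by
        have := hb; rw [Set.mem_setOf_eq, hent] at this
        split_ifs at this with hc
        · exact this
        · exact absurd this.symm one_ne_zero
      exact hX.2.2 l ha' hb'
  rw [rank_ppm _ hXc]
  congr 1
  ext p
  rw [mem_ones, mem_ones, hent]
  constructor
  · rintro ⟨-, -, hp⟩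
    split_ifs at hp with hc
    · exact ⟨Nat.lt_succ_of_le hc.1, Nat.lt_succ_of_le hc.2, hp⟩
    · exact absurd hp.symm one_ne_zero
  · rintro ⟨h1, h2, hp⟩
    have hc : p.1 ≤ i ∧ p.2 ≤ j := ⟨Nat.lt_succ_iff.1 h1, Nat.lt_succ_iff.1 h2⟩
    exact ⟨p.1.isLt, p.2.isLt, by rw [if_pos hc]; exact hp⟩

/-- Inclusion-exclusion identity for corner counts. -/
lemma count_id (X : Matrix (Fin n) (Fin n) ℂ) (i j : Fin n) :
    (ones X ((i : ℕ) + 1) ((j : ℕ) + 1)).card + (ones X i j).card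
      = (ones X ((i : ℕ) + 1) j).card + (ones X i ((j : ℕ) + 1)).card
        + (if X i j = 1 then 1 else 0) := by
  classical
  set A := ones X ((i : ℕ) + 1) (j : ℕ) with hA
  set Bs := ones X (i : ℕ) ((j : ℕ) + 1) with hBs
  set D := (Finset.univ.filter fun p : Fin n × Fin n => p = (i, j) ∧ X p.1 p.2 = 1) with hD
  have hpeq : ∀ p : Fin n × Fin n,
      p = (i, j) ↔ ((p.1 : ℕ) = (i : ℕ) ∧ (p.2 : ℕ) = (j : ℕ)) := by
    intro p
    simp [Prod.ext_iff, Fin.ext_iff]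
  have hsplit : ones X ((i : ℕ) + 1) ((j : ℕ) + 1) = (A ∪ Bs) ∪ D := by
    ext p
    simp only [mem_ones, hA, hBs, hD, Finset.mem_union, Finset.mem_filter,
      Finset.mem_univ, true_and, hpeq]
    by_cases hP : X p.1 p.2 = 1
    · simp only [hP, and_true]
      omega
    · simp [hP]
  have hdisj : Disjoint (A ∪ Bs) D := by
    rw [Finset.disjoint_right]
    intro p hp hpu
    rw [hD, Finset.mem_filter] at hp
    obtain ⟨heq1, heq2⟩ := hpeq p |>.1 hp.2.1
    rw [Finset.mem_union, hA, hBs, mem_ones, mem_ones] at hpu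
    omega
  have hinter : A ∩ Bs = ones X (i : ℕ) (j : ℕ) := by
    ext p
    simp only [Finset.mem_inter, hA, hBs, mem_ones]
    by_cases hP : X p.1 p.2 = 1
    · simp only [hP, and_true]
      omega
    · simp [hP]
  have hDcard : D.card = (if X i j = 1 then 1 else 0) := by
    split_ifs with hone
    · rw [Finset.card_eq_one]
      refine ⟨(i, j), ?_⟩
      ext p
      simp only [hD, Finset.mem_filter, Finset.mem_univ, true_and, Finset.mem_singleton]
      constructor
      · exact fun hp => hp.1
      · rintro rfl; exact ⟨rfl, hone⟩
    · rw [Finset.card_eq_zero]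
      ext p
      simp only [hD, Finset.mem_filter, Finset.mem_univ, true_and,
        Finset.notMem_empty, iff_false, not_and]
      rintro rfl
      exact hone
  have h1 : (ones X ((i : ℕ) + 1) ((j : ℕ) + 1)).card = (A ∪ Bs).card + D.card := by
    rw [hsplit, Finset.card_union_of_disjoint hdisj]
  have h2 : (A ∪ Bs).card + (A ∩ Bs).card = A.card + Bs.card :=
    Finset.card_union_add_card_inter _ _
  rw [hinter] at h2
  omega

lemma ones_zero_left (X : Matrix (Fin n) (Fin n) ℂ) (b : ℕ) : ones X 0 b = ∅ := by
  ext p; simp [mem_ones]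

lemma ones_zero_right (X : Matrix (Fin n) (Fin n) ℂ) (a : ℕ) : ones X a 0 = ∅ := by
  ext p; simp [mem_ones]

end Stmt8Aux

open Stmt8Aux

theorem stmt8 {n : ℕ} (π σ B : Matrix (Fin n) (Fin n) ℂ)
    (hπ : IsPartialInvolution π) (hσ : IsPartialInvolution σ)
    (hBu : IsUnit B.det) (hBt : ∀ i j : Fin n, j < i → B i j = 0)
    (h : Bᵀ * π * B = σ) :
    π = σ := by
  classical
  have key : ∀ i j : Fin n,
      (ones σ ((i : ℕ) + 1) ((j : ℕ) + 1)).card = (ones π ((i : ℕ) + 1) ((j : ℕ) + 1)).card := by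
    intro i j
    have h1 : E i * σ * E j = (Bc B i)ᵀ * (E i * π * E j) * Bc B j := by
      rw [← h]; exact (transfer B hBt π i j).symm
    have h2 : (E i * σ * E j).rank = (E i * π * E j).rank := by
      rw [h1, Matrix.rank_mul_eq_left_of_isUnit_det _ _ (det_Bc B hBt hBu j),
        Matrix.rank_mul_eq_right_of_isUnit_det _ _
          (by rw [Matrix.det_transpose]; exact det_Bc B hBt hBu i)]
    rw [corner_rank σ hσ.1 i j, corner_rank π hπ.1 i j] at h2
    exact h2
  have key' : ∀ a b : ℕ, a ≤ n → b ≤ n →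
      (ones σ a b).card = (ones π a b).card := by
    intro a b ha hb
    match a, b with
    | 0, b => rw [ones_zero_left, ones_zero_left]
    | a + 1, 0 => rw [ones_zero_right, ones_zero_right]
    | a + 1, b + 1 =>
      have ha' : a < n := by omega
      have hb' : b < n := by omega
      exact key ⟨a, ha'⟩ ⟨b, hb'⟩
  ext i j
  have e1 := count_id π i j
  have e2 := count_id σ i j
  have c1 := key' ((i : ℕ) + 1) ((j : ℕ) + 1) (by omega) (by omega)
  have c2 := key' (i : ℕ) (j : ℕ) (by omega) (by omega)
  have c3 := key' ((i : ℕ) + 1) (j : ℕ) (by omega) (by omega)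
  have c4 := key' (i : ℕ) ((j : ℕ) + 1) (by omega) (by omega)
  obtain ⟨x, hx⟩ : ∃ x : ℕ, (if π i j = 1 then 1 else 0 : ℕ) = x := ⟨_, rfl⟩
  obtain ⟨y, hy⟩ : ∃ y : ℕ, (if σ i j = 1 then 1 else 0 : ℕ) = y := ⟨_, rfl⟩
  rw [hx] at e1
  rw [hy] at e2
  have hxy : x = y := by omega
  have hiff : (if π i j = 1 then (1 : ℕ) else 0) = (if σ i j = 1 then 1 else 0) := by
    rw [hx, hy]; exact hxy
  rcases hπ.1.1 i j with h0 | h1 <;> rcases hσ.1.1 i j with g0 | g1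
  · rw [h0, g0]
  · simp [h0, g1] at hiff
  · simp [h1, g0] at hiff
  · rw [h1, g1]
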